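/- arXiv:1808.03134 — 6 statements merged into one kernel-verified Lean document; each statement's English description precedes it below -/
import Mathlib

section
/- Consider the 6-dimensional real Lie algebra g with basis e0,...,e5 and nonzero brackets [e2,e4]=e1, [e3,e5]=e1, [e0,e2]=e4, [e0,e3]=b·e5, [e0,e4]=-e2 (b ∈ ℝ). Then g is a Lie algebra (Jacobi identity holds), it is solvable, and for every X ∈ g all complex eigenvalues of ad_X are purely imaginary (g is of type I). -/
@[simp] lemma Matrix.cons_val_five {α : Type*} (x : α) (u : Fin 5 → α) :
    Matrix.vecCons x u 5 = u 4 := rfl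

/-- The bracket of the 6-dimensional Lie algebra `g_{1,b}`, with basis `e0,…,e5` and
nonzero brackets `[e2,e4]=e1`, `[e3,e5]=e1`, `[e0,e2]=e4`, `[e0,e3]=b e5`, `[e0,e4]=-e2`,
extended bilinearly and antisymmetrically. -/
def g1Bracket (b : ℝ) (X Y : Fin 6 → ℝ) : Fin 6 → ℝ :=
  ![0,
    X 2 * Y 4 - X 4 * Y 2 + X 3 * Y 5 - X 5 * Y 3,
    -(X 0 * Y 4 - X 4 * Y 0),
    0,
    X 0 * Y 2 - X 2 * Y 0,
    b * (X 0 * Y 3 - X 3 * Y 0)]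

/-- The derived series of a bracket on a real vector space. -/
def derSeries {V : Type*} [AddCommGroup V] [Module ℝ V] (br : V → V → V) : ℕ → Submodule ℝ V
  | 0 => ⊤
  | n + 1 => Submodule.span ℝ
      {z | ∃ x ∈ derSeries br n, ∃ y ∈ derSeries br n, z = br x y}

/-- The matrix of `ad_X` in the standard basis. -/
noncomputable def g1Ad (b : ℝ) (X : Fin 6 → ℝ) : Matrix (Fin 6) (Fin 6) ℝ :=
  Matrix.of fun i j => g1Bracket b X (Pi.single j 1) i

set_option maxHeartbeats 2000000 in
set_option maxRecDepth 10000 in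
lemma g1_charpoly_eval (b : ℝ) (X : Fin 6 → ℝ) (c : ℂ) :
    Polynomial.eval c ((g1Ad b X).map Complex.ofReal).charpoly
      = c^4 * (c^2 + (X 0 : ℂ)^2) := by
  rw [Matrix.charpoly, ← Polynomial.coe_evalRingHom, RingHom.map_det]
  have h : ((g1Ad b X).map Complex.ofReal).charmatrix.map (Polynomial.evalRingHom c)
      = Matrix.of ![
        ![c, 0, 0, 0, 0, 0],
        ![0, c, (X 4 : ℂ), (X 5 : ℂ), -(X 2 : ℂ), -(X 3 : ℂ)],
        ![-(X 4 : ℂ), 0, c, 0, (X 0 : ℂ), 0],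
        ![0, 0, 0, c, 0, 0],
        ![(X 2 : ℂ), 0, -(X 0 : ℂ), 0, c, 0],
        ![(b : ℂ) * (X 3 : ℂ), 0, 0, -(b:ℂ) * (X 0 : ℂ), 0, c]] := by
    ext i j
    fin_cases i <;> fin_cases j <;>
      simp [Matrix.charmatrix_apply, g1Ad, g1Bracket, Matrix.diagonal, Pi.single_apply,
        Matrix.cons_val_succ, Matrix.vecHead, Matrix.vecTail, Matrix.cons_val_five]
  rw [RingHom.mapMatrix_apply, h]
  simp [Matrix.det_succ_row_zero, Fin.sum_univ_succ, Matrix.submatrix_apply, Fin.succAbove]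
  ring

private lemma g1_D1 (b : ℝ) :
    ∀ z ∈ derSeries (g1Bracket b) 1, z 0 = 0 ∧ z 3 = 0 := by
  intro z hz
  rw [derSeries] at hz
  induction hz using Submodule.span_induction with
  | mem z hzm =>
      obtain ⟨x, -, y, -, rfl⟩ := hzm
      exact ⟨rfl, rfl⟩
  | zero => exact ⟨rfl, rfl⟩
  | add x y _ _ hx hy => exact ⟨by simp [hx.1, hy.1], by simp [hx.2, hy.2]⟩
  | smul r x _ hx => exact ⟨by simp [hx.1], by simp [hx.2]⟩

private lemma g1_D2 (b : ℝ) :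
    ∀ z ∈ derSeries (g1Bracket b) 2, z 0 = 0 ∧ z 2 = 0 ∧ z 3 = 0 ∧ z 4 = 0 ∧ z 5 = 0 := by
  intro z hz
  rw [derSeries] at hz
  induction hz using Submodule.span_induction with
  | mem z hzm =>
      obtain ⟨x, hx, y, hy, rfl⟩ := hzm
      obtain ⟨hx0, hx3⟩ := g1_D1 b x hx
      obtain ⟨hy0, hy3⟩ := g1_D1 b y hy
      refine ⟨rfl, ?_, rfl, ?_, ?_⟩ <;> simp [g1Bracket, hx0, hx3, hy0, hy3]
  | zero => exact ⟨rfl, rfl, rfl, rfl, rfl⟩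
  | add x y _ _ hx hy =>
      exact ⟨by simp [hx.1, hy.1], by simp [hx.2.1, hy.2.1], by simp [hx.2.2.1, hy.2.2.1],
        by simp [hx.2.2.2.1, hy.2.2.2.1], by simp [hx.2.2.2.2, hy.2.2.2.2]⟩
  | smul r x _ hx =>
      exact ⟨by simp [hx.1], by simp [hx.2.1], by simp [hx.2.2.1],
        by simp [hx.2.2.2.1], by simp [hx.2.2.2.2]⟩

/-- `g_{1,b}` is a Lie algebra (the Jacobi identity holds), it is solvable, and it is of
type I: every complex eigenvalue of every `ad_X` is purely imaginary. -/
theorem g1_lie_solvable_typeI (b : ℝ) :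
    (∀ X Y Z : Fin 6 → ℝ,
      g1Bracket b (g1Bracket b X Y) Z + g1Bracket b (g1Bracket b Y Z) X
        + g1Bracket b (g1Bracket b Z X) Y = 0) ∧
    (∃ n : ℕ, derSeries (g1Bracket b) n = ⊥) ∧
    (∀ X : Fin 6 → ℝ, ∀ c : ℂ,
      c ∈ ((g1Ad b X).map Complex.ofReal).charpoly.roots → c.re = 0) := by
  refine ⟨?_, ⟨3, ?_⟩, ?_⟩
  · intro X Y Z
    funext i
    fin_cases i <;> simp [g1Bracket] <;> ring
  · rw [eq_bot_iff, derSeries, Submodule.span_le]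
    rintro z ⟨x, hx, y, hy, rfl⟩
    obtain ⟨hx0, hx2, hx3, hx4, hx5⟩ := g1_D2 b x hx
    obtain ⟨hy0, hy2, hy3, hy4, hy5⟩ := g1_D2 b y hy
    have : g1Bracket b x y = 0 := by
      funext i
      fin_cases i <;> simp [g1Bracket, hx0, hx2, hx3, hx4, hx5, hy0, hy2, hy3, hy4, hy5]
    simp [this]
  · intro X c hc
    have hne : ((g1Ad b X).map Complex.ofReal).charpoly ≠ 0 :=
      (Matrix.charpoly_monic _).ne_zero
    rw [Polynomial.mem_roots hne] at hc
    have key := g1_charpoly_eval b X c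
    rw [hc] at key
    rcases mul_eq_zero.mp key.symm with h | h
    · have : c = 0 := by
        have := pow_eq_zero_iff (n := 4) (by norm_num) |>.mp h
        exact this
      simp [this]
    · have h2 : c ^ 2 = -((X 0 : ℂ))^2 := by linear_combination h
      have him := congrArg Complex.im h2
      have hre := congrArg Complex.re h2
      simp [pow_two, Complex.mul_im, Complex.mul_re] at him hre
      have hprod : c.re * c.im = 0 := by linarith
      rcases mul_eq_zero.mp hprod with h' | h'
      · exact h'
      · nlinarith [sq_nonneg (X 0), sq_nonneg c.re]
end

section
/- Consider the 6-dimensional real Lie algebra g_{1,b} with basis e0,...,e5, nonzero brackets [e2,e4]=e1, [e3,e5]=e1, [e0,e2]=e4, [e0,e3]=b e5, [e0,e4]=-e2, and dual basis e^0,...,e^5. Then θ = e^0 and ω = -e^{01} - e^{24} - e^{35} satisfy: ω is nondegenerate, dθ = 0, and dω = θ ∧ ω, where d is the Chevalley–Eilenberg differential. -/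
lemma vec6_val_0 (a b c d e f : ℝ) : ![a,b,c,d,e,f] (0:Fin 6) = a := rfl
lemma vec6_val_1 (a b c d e f : ℝ) : ![a,b,c,d,e,f] (1:Fin 6) = b := rfl
lemma vec6_val_2 (a b c d e f : ℝ) : ![a,b,c,d,e,f] (2:Fin 6) = c := rfl
lemma vec6_val_3 (a b c d e f : ℝ) : ![a,b,c,d,e,f] (3:Fin 6) = d := rfl
lemma vec6_val_4 (a b c d e f : ℝ) : ![a,b,c,d,e,f] (4:Fin 6) = e := rfl
lemma vec6_val_5 (a b c d e f : ℝ) : ![a,b,c,d,e,f] (5:Fin 6) = f := rfl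

/-- The 1-form `θ = e^0` on `g_{1,b}`. -/
def g1θ (X : Fin 6 → ℝ) : ℝ := X 0

/-- The 2-form `ω = -e^{01} - e^{24} - e^{35}` on `g_{1,b}`. -/
def g1ω (X Y : Fin 6 → ℝ) : ℝ :=
  -(X 0 * Y 1 - X 1 * Y 0) - (X 2 * Y 4 - X 4 * Y 2) - (X 3 * Y 5 - X 5 * Y 3)

/-- On `g_{1,b}`, the pair `(ω = -e^{01} - e^{24} - e^{35}, θ = e^0)` is an LCS structure:
`ω` is nondegenerate, `dθ = 0`, and `dω = θ ∧ ω` (Chevalley–Eilenberg differential). -/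
theorem g1_lcs (b : ℝ) :
    (∀ X : Fin 6 → ℝ, (∀ Y : Fin 6 → ℝ, g1ω X Y = 0) → X = 0) ∧
    (∀ X Y : Fin 6 → ℝ, -g1θ (g1Bracket b X Y) = 0) ∧
    (∀ X Y Z : Fin 6 → ℝ,
      -g1ω (g1Bracket b X Y) Z + g1ω (g1Bracket b X Z) Y - g1ω (g1Bracket b Y Z) X
        = g1θ X * g1ω Y Z - g1θ Y * g1ω X Z + g1θ Z * g1ω X Y) := by
  refine ⟨?_, ?_, ?_⟩
  · intro X h
    funext i
    fin_cases i
    · have := h ![0,1,0,0,0,0]; simp [g1ω, vec6_val_0, vec6_val_1, vec6_val_2, vec6_val_3, vec6_val_4, vec6_val_5] at this; simpa using this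
    · have := h ![1,0,0,0,0,0]; simp [g1ω, vec6_val_0, vec6_val_1, vec6_val_2, vec6_val_3, vec6_val_4, vec6_val_5] at this; simpa using this
    · have := h ![0,0,0,0,1,0]; simp [g1ω, vec6_val_0, vec6_val_1, vec6_val_2, vec6_val_3, vec6_val_4, vec6_val_5] at this; simpa using this
    · have := h ![0,0,0,0,0,1]; simp [g1ω, vec6_val_0, vec6_val_1, vec6_val_2, vec6_val_3, vec6_val_4, vec6_val_5] at this; simpa using this
    · have := h ![0,0,1,0,0,0]; simp [g1ω, vec6_val_0, vec6_val_1, vec6_val_2, vec6_val_3, vec6_val_4, vec6_val_5] at this; simpa using this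
    · have := h ![0,0,0,1,0,0]; simp [g1ω, vec6_val_0, vec6_val_1, vec6_val_2, vec6_val_3, vec6_val_4, vec6_val_5] at this; simpa using this
  · intro X Y; simp [g1θ, g1Bracket]
  · intro X Y Z; simp [g1θ, g1ω, g1Bracket, vec6_val_0, vec6_val_1, vec6_val_2, vec6_val_3, vec6_val_4, vec6_val_5]; ring
end

section
/- Let h be the 5-dimensional Lie algebra with nonzero brackets [e2,e3]=e1, [e2,e5]=e3, [e3,e5]=-e2, [e4,e5]=e1. Then h is solvable, non-nilpotent, and of type I: for every X ∈ h all complex eigenvalues of ad_X are purely imaginary, but there exists X with ad_X not nilpotent. -/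
/-- The bracket of the 5-dimensional Lie algebra `h` with basis `e1,…,e5` (indices
`0,…,4`) and nonzero brackets `[e2,e3]=e1`, `[e2,e5]=e3`, `[e3,e5]=-e2`, `[e4,e5]=e1`. -/
def hBracket (X Y : Fin 5 → ℝ) : Fin 5 → ℝ :=
  ![X 1 * Y 2 - X 2 * Y 1 + X 3 * Y 4 - X 4 * Y 3,
    -(X 2 * Y 4 - X 4 * Y 2),
    X 1 * Y 4 - X 4 * Y 1,
    0,
    0]

/-- The matrix of `ad_X` in the standard basis. -/
noncomputable def hAd (X : Fin 5 → ℝ) : Matrix (Fin 5) (Fin 5) ℝ :=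
  Matrix.of fun i j => hBracket X (Pi.single j 1) i

lemma hAd_eq (X : Fin 5 → ℝ) : hAd X =
    !![0, -X 2, X 1, -X 4, X 3;
       0, 0, X 4, 0, -X 2;
       0, -X 4, 0, 0, X 1;
       0, 0, 0, 0, 0;
       0, 0, 0, 0, 0] := by
  ext i j
  fin_cases i <;> fin_cases j <;>
    simp [hAd, hBracket, Pi.single_apply, Matrix.vecHead, Matrix.vecTail]

open Polynomial in
lemma charpoly_eval (X : Fin 5 → ℝ) (c : ℂ) :
    ((hAd X).map Complex.ofReal).charpoly.eval c = c^3 * (c^2 + (X 4:ℂ)^2) := by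
  have h : ((hAd X).map Complex.ofReal).charpoly.eval c
      = ((((hAd X).map Complex.ofReal).charmatrix).map (evalRingHom c)).det := by
    rw [Matrix.charpoly, ← coe_evalRingHom, RingHom.map_det, RingHom.mapMatrix_apply]
  rw [h]
  have h2 : (((hAd X).map Complex.ofReal).charmatrix).map (evalRingHom c) =
      !![c, (X 2:ℂ), -(X 1:ℂ), (X 4:ℂ), -(X 3:ℂ);
         0, c, -(X 4:ℂ), 0, (X 2:ℂ);
         0, (X 4:ℂ), c, 0, -(X 1:ℂ);
         0, 0, 0, c, 0;
         0, 0, 0, 0, c] := by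
    ext i j
    fin_cases i <;> fin_cases j <;>
      simp [Matrix.charmatrix_apply, hAd_eq, Matrix.vecHead, Matrix.vecTail, Matrix.one_apply]
  rw [h2]
  simp [Matrix.det_succ_row_zero, Fin.sum_univ_succ, Fin.succAbove_zero, Fin.succ_succAbove_zero,
    Fin.succ_succAbove_succ, show Fin.succAbove (1 : Fin 4) 2 = 3 from by decide]
  ring

/-- kernel of the `i`-th coordinate projection -/
noncomputable def P (i : Fin 5) : Submodule ℝ (Fin 5 → ℝ) :=
  LinearMap.ker (LinearMap.proj i : (Fin 5 → ℝ) →ₗ[ℝ] ℝ)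

lemma mem_P {i : Fin 5} {v : Fin 5 → ℝ} : v ∈ P i ↔ v i = 0 := by
  simp [P, LinearMap.mem_ker]

lemma derSeries_three : derSeries hBracket 3 = ⊥ := by
  -- step 1 : the first derived algebra lies in the subspace `x 3 = x 4 = 0`
  have hD1 : ∀ z ∈ derSeries hBracket 1, z 3 = 0 ∧ z 4 = 0 := by
    have : derSeries hBracket 1 ≤ P 3 ⊓ P 4 := by
      refine Submodule.span_le.2 ?_
      rintro z ⟨x, -, y, -, rfl⟩
      simp [Submodule.mem_inf, mem_P, hBracket]
    intro z hz
    have := this hz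
    simpa [Submodule.mem_inf, mem_P] using this
  -- step 2 : the second derived algebra lies in the subspace `x 1 = x 2 = x 3 = x 4 = 0`
  have hD2 : ∀ z ∈ derSeries hBracket 2, z 1 = 0 ∧ z 2 = 0 ∧ z 3 = 0 ∧ z 4 = 0 := by
    have : derSeries hBracket 2 ≤ P 1 ⊓ P 2 ⊓ (P 3 ⊓ P 4) := by
      refine Submodule.span_le.2 ?_
      rintro z ⟨x, hx, y, hy, rfl⟩
      obtain ⟨hx3, hx4⟩ := hD1 x hx
      obtain ⟨hy3, hy4⟩ := hD1 y hy
      simp [Submodule.mem_inf, mem_P, hBracket, hx4, hy4]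
    intro z hz
    have := this hz
    simp only [Submodule.mem_inf, mem_P] at this
    tauto
  -- step 3 : brackets of elements of the second derived algebra vanish
  rw [show (3 : ℕ) = 2 + 1 from rfl, derSeries]
  rw [Submodule.span_eq_bot]
  rintro z ⟨x, hx, y, hy, rfl⟩
  obtain ⟨hx1, hx2, hx3, hx4⟩ := hD2 x hx
  obtain ⟨hy1, hy2, hy3, hy4⟩ := hD2 y hy
  funext i
  fin_cases i <;>
    simp [hBracket, hx1, hx2, hx3, hx4, hy1, hy2, hy3, hy4]

/-- `h` is solvable, of type I (every complex eigenvalue of every `ad_X` is purely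
imaginary), but non-nilpotent: there exists `X` with `ad_X` not nilpotent. -/
theorem h_solvable_typeI_not_nilpotent :
    (∃ n : ℕ, derSeries hBracket n = ⊥) ∧
    (∀ X : Fin 5 → ℝ, ∀ c : ℂ,
      c ∈ ((hAd X).map Complex.ofReal).charpoly.roots → c.re = 0) ∧
    (∃ X : Fin 5 → ℝ, ¬ IsNilpotent (hAd X)) := by
  refine ⟨⟨3, derSeries_three⟩, ?_, ?_⟩
  · intro X c hc
    have h0 := Polynomial.isRoot_of_mem_roots hc
    rw [Polynomial.IsRoot, charpoly_eval] at h0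
    rcases mul_eq_zero.1 h0 with h | h
    · have : c = 0 := by
        have := pow_eq_zero_iff (n := 3) (by norm_num) |>.1 h
        exact this
      simp [this]
    · have h' : (c - Complex.I * (X 4 : ℂ)) * (c + Complex.I * (X 4 : ℂ)) = 0 := by
        linear_combination h - (X 4 : ℂ)^2 * Complex.I_sq
      rcases mul_eq_zero.1 h' with h'' | h''
      · have : c = Complex.I * (X 4 : ℂ) := by linear_combination h''
        simp [this]
      · have : c = -(Complex.I * (X 4 : ℂ)) := by linear_combination h''
        simp [this]
  · refine ⟨![0, 0, 0, 0, 1], fun hnil => ?_⟩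
    set M := hAd ![0, 0, 0, 0, 1] with hM
    have h2 : IsNilpotent (M ^ 2) := by
      obtain ⟨n, hn⟩ := hnil
      exact ⟨n, by rw [← pow_mul, mul_comm, pow_mul, hn]; simp⟩
    have htr := (Matrix.isNilpotent_trace_of_isNilpotent h2).eq_zero
    have : Matrix.trace (M ^ 2) = -2 := by
      rw [hM, hAd_eq]
      norm_num [pow_two, Matrix.trace, Matrix.diag, Fin.sum_univ_five, Matrix.mul_apply]
      simp
      norm_num
    rw [this] at htr
    norm_num at htr
end

section
/- Let (g, ω, θ) be a Lie algebra with an LCS structure of the first kind, i.e. there exists X ∈ g with L_X ω = 0 and θ(X) ≠ 0. Then ω is d_θ-exact: ω = dη - θ ∧ η where η = -i_U ω and U = X/θ(X) (so [ω] = 0 in the Morse–Novikov cohomology H²_θ(g)). -/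
/-- If an LCS structure `(ω, θ)` on a Lie algebra `g` is of the first kind (there is an
infinitesimal automorphism `X` with `θ(X) ≠ 0`), then `ω` is `d_θ`-exact:
`ω = dη - θ ∧ η` where `η = -i_U ω` and `U = X / θ(X)`. -/
theorem firstKind_exact (g : Type*) [LieRing g] [LieAlgebra ℝ g] [FiniteDimensional ℝ g]
    (ω : g →ₗ[ℝ] g →ₗ[ℝ] ℝ) (θ : g →ₗ[ℝ] ℝ)
    (hskew : ∀ x y : g, ω x y = -ω y x)
    (hnondeg : ∀ x : g, (∀ y : g, ω x y = 0) → x = 0)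
    (hclosed : ∀ x y : g, θ ⁅x, y⁆ = 0)
    (hlcs : ∀ x y z : g,
      -ω ⁅x, y⁆ z + ω ⁅x, z⁆ y - ω ⁅y, z⁆ x
        = θ x * ω y z - θ y * ω x z + θ z * ω x y)
    (X : g) (hX : ∀ y z : g, ω ⁅X, y⁆ z + ω y ⁅X, z⁆ = 0) (hθX : θ X ≠ 0) :
    ∀ y z : g,
      ω y z = -(-ω ((θ X)⁻¹ • X) ⁅y, z⁆)
        - (θ y * (-ω ((θ X)⁻¹ • X) z) - θ z * (-ω ((θ X)⁻¹ • X) y)) := by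
  intro y z
  have h := hlcs X y z
  have h1 := hX y z
  have h2 := hskew y ⁅X, z⁆
  have h3 := hskew ⁅y, z⁆ X
  simp only [map_smul, LinearMap.smul_apply, smul_eq_mul]
  field_simp
  nlinarith [h, h1, h2, h3]
end

section
/- Let (s, β) be a finite-dimensional symplectic Lie algebra and E a derivation of s with β(EX,Y) + β(X,EY) = 0 for all X, Y. Define g = ℝU ⊕ ℝV ⊕ s with bracket [X,Y]_g = β(X,Y)V + [X,Y]_s, [U,X]_g = EX for X,Y ∈ s, and [U,V]=0, V central. Then g is a Lie algebra (the bracket satisfies the Jacobi identity). -/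
/-- The bracket of the double extension `g = ℝU ⊕ ℝV ⊕ s` of a symplectic Lie algebra
`(s, β)` by a symplectic derivation `E`: `[X,Y] = β(X,Y)V + [X,Y]_s`, `[U,X] = EX`,
`[U,V] = 0`, `V` central.  Here an element of `g` is a triple `(u, v, X)`. -/
def dblBracket {s : Type*} [LieRing s] [LieAlgebra ℝ s]
    (β : s →ₗ[ℝ] s →ₗ[ℝ] ℝ) (E : s →ₗ[ℝ] s) (p q : ℝ × ℝ × s) : ℝ × ℝ × s :=
  (0, β p.2.2 q.2.2, p.1 • E q.2.2 - q.1 • E p.2.2 + ⁅p.2.2, q.2.2⁆)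

/-- The double extension of a symplectic Lie algebra `(s, β)` by a derivation `E` with
`β(EX,Y) + β(X,EY) = 0` is a Lie algebra: its bracket satisfies the Jacobi identity. -/
theorem double_extension_jacobi (s : Type*) [LieRing s] [LieAlgebra ℝ s]
    [FiniteDimensional ℝ s]
    (β : s →ₗ[ℝ] s →ₗ[ℝ] ℝ) (E : s →ₗ[ℝ] s)
    (hskew : ∀ X Y : s, β X Y = -β Y X)
    (hnondeg : ∀ X : s, (∀ Y : s, β X Y = 0) → X = 0)
    (hclosedβ : ∀ X Y Z : s, -β ⁅X, Y⁆ Z + β ⁅X, Z⁆ Y - β ⁅Y, Z⁆ X = 0)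
    (hder : ∀ X Y : s, E ⁅X, Y⁆ = ⁅E X, Y⁆ + ⁅X, E Y⁆)
    (hEskew : ∀ X Y : s, β (E X) Y + β X (E Y) = 0) :
    ∀ p q r : ℝ × ℝ × s,
      dblBracket β E (dblBracket β E p q) r + dblBracket β E (dblBracket β E q r) p
        + dblBracket β E (dblBracket β E r p) q = 0 := by
  rintro ⟨a, A, X⟩ ⟨b, B, Y⟩ ⟨c, C, Z⟩
  simp only [dblBracket, Prod.mk_add_mk, Prod.ext_iff, Prod.fst_zero, Prod.snd_zero,
    map_add, map_sub, map_smul, LinearMap.add_apply, LinearMap.sub_apply,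
    LinearMap.smul_apply, smul_eq_mul, add_lie, sub_lie, smul_lie, zero_smul]
  refine ⟨by ring, ?_, ?_⟩
  · have h0 : (⁅X, Z⁆ : s) = -⁅Z, X⁆ := (neg_eq_iff_eq_neg.mp (lie_skew Z X)).symm ▸ rfl
    have h1 : (β ⁅X, Z⁆) Y + (β ⁅Z, X⁆) Y = 0 := by
      rw [h0, map_neg, LinearMap.neg_apply]; ring
    linear_combination a * hEskew Y Z + b * hEskew Z X + c * hEskew X Y
      - a * hskew (E Z) Y - b * hskew (E X) Z - c * hskew (E Y) X
      - hclosedβ X Y Z + h1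
  · have hj : ⁅⁅X, Y⁆, Z⁆ + ⁅⁅Y, Z⁆, X⁆ + ⁅⁅Z, X⁆, Y⁆ = 0 := by
      have h := lie_jacobi X Y Z
      have e1 : (⁅⁅X, Y⁆, Z⁆ : s) = -⁅Z, ⁅X, Y⁆⁆ := by rw [lie_skew]
      have e2 : (⁅⁅Y, Z⁆, X⁆ : s) = -⁅X, ⁅Y, Z⁆⁆ := by rw [lie_skew]
      have e3 : (⁅⁅Z, X⁆, Y⁆ : s) = -⁅Y, ⁅Z, X⁆⁆ := by rw [lie_skew]
      rw [e1, e2, e3]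
      linear_combination (norm := abel) -h
    have sk1 : ⁅X, E Y⁆ + ⁅E Y, X⁆ = 0 := by
      rw [← lie_skew (E Y) X]; abel
    have sk2 : ⁅Y, E Z⁆ + ⁅E Z, Y⁆ = 0 := by
      rw [← lie_skew (E Z) Y]; abel
    have sk3 : ⁅Z, E X⁆ + ⁅E X, Z⁆ = 0 := by
      rw [← lie_skew (E X) Z]; abel
    linear_combination (norm := module) (-c : ℝ) • hder X Y + (-a : ℝ) • hder Y Z
      + (-b : ℝ) • hder Z X + (-c : ℝ) • sk1 + (-a : ℝ) • sk2 + (-b : ℝ) • sk3 + hj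
end

section
/- With g the double extension of a symplectic Lie algebra (s, β) by a symplectic derivation E as above, define θ, η ∈ g* by θ(U)=1, θ(V)=0, η(V)=1, η(U)=0, θ|_s = η|_s = 0. Then ω = dη - θ ∧ η is a nondegenerate 2-form on g, θ is closed, and dω = θ ∧ ω; moreover the Lee vector of (ω,θ) is V, which is central in g. -/
/-- `θ(U) = 1`, `θ(V) = 0`, `θ|_s = 0`. -/
def dblθ {s : Type*} (p : ℝ × ℝ × s) : ℝ := p.1

/-- `η(V) = 1`, `η(U) = 0`, `η|_s = 0`. -/
def dblη {s : Type*} (p : ℝ × ℝ × s) : ℝ := p.2.1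

/-- The 2-form `ω = dη - θ ∧ η` on the double extension. -/
def dblω {s : Type*} [LieRing s] [LieAlgebra ℝ s]
    (β : s →ₗ[ℝ] s →ₗ[ℝ] ℝ) (E : s →ₗ[ℝ] s) (p q : ℝ × ℝ × s) : ℝ :=
  -dblη (dblBracket β E p q) - (dblθ p * dblη q - dblθ q * dblη p)

/-- On the double extension `g` of `(s, β)` by a symplectic derivation `E`, the form
`ω = dη - θ ∧ η` is nondegenerate, `θ` is closed, `dω = θ ∧ ω`, and the Lee vector
(`i_V ω = θ`) is `V = (0,1,0)`, which is central in `g`. -/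
theorem double_extension_lcs (s : Type*) [LieRing s] [LieAlgebra ℝ s]
    [FiniteDimensional ℝ s]
    (β : s →ₗ[ℝ] s →ₗ[ℝ] ℝ) (E : s →ₗ[ℝ] s)
    (hskew : ∀ X Y : s, β X Y = -β Y X)
    (hnondeg : ∀ X : s, (∀ Y : s, β X Y = 0) → X = 0)
    (hclosedβ : ∀ X Y Z : s, -β ⁅X, Y⁆ Z + β ⁅X, Z⁆ Y - β ⁅Y, Z⁆ X = 0)
    (hder : ∀ X Y : s, E ⁅X, Y⁆ = ⁅E X, Y⁆ + ⁅X, E Y⁆)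
    (hEskew : ∀ X Y : s, β (E X) Y + β X (E Y) = 0) :
    (∀ p : ℝ × ℝ × s, (∀ q : ℝ × ℝ × s, dblω β E p q = 0) → p = 0) ∧
    (∀ p q : ℝ × ℝ × s, dblθ (dblBracket β E p q) = 0) ∧
    (∀ p q r : ℝ × ℝ × s,
      -dblω β E (dblBracket β E p q) r + dblω β E (dblBracket β E p r) q
          - dblω β E (dblBracket β E q r) p
        = dblθ p * dblω β E q r - dblθ q * dblω β E p r + dblθ r * dblω β E p q) ∧
    (∀ q : ℝ × ℝ × s, dblω β E ((0 : ℝ), (1 : ℝ), (0 : s)) q = dblθ q) ∧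
    (∀ q : ℝ × ℝ × s, dblBracket β E ((0 : ℝ), (1 : ℝ), (0 : s)) q = 0) := by
  refine ⟨?_, ?_, ?_, ?_, ?_⟩
  · rintro ⟨a, b, X⟩ hp
    have h1 := hp (1, 0, 0)
    have h2 := hp (0, 1, 0)
    have h3 : ∀ Y : s, β X Y = 0 := by
      intro Y
      have := hp (0, 0, Y)
      simp only [dblω, dblBracket, dblθ, dblη, map_zero, LinearMap.zero_apply] at this ⊢
      linarith
    have hX := hnondeg X h3
    simp only [dblω, dblBracket, dblθ, dblη, map_zero, LinearMap.zero_apply] at h1 h2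
    refine Prod.ext ?_ (Prod.ext ?_ ?_) <;> simp <;> [linarith; linarith; exact hX]
  · intro p q; rfl
  · rintro ⟨a, b, X⟩ ⟨c, d, Y⟩ ⟨e, f, Z⟩
    simp only [dblω, dblBracket, dblθ, dblη, map_add, map_sub, map_smul,
      LinearMap.add_apply, LinearMap.sub_apply, LinearMap.smul_apply, smul_eq_mul]
    linear_combination a * (hEskew Y Z) - a * (hskew (E Z) Y)
      - c * (hEskew X Z) + c * (hskew (E Z) X)
      + e * (hEskew X Y) - e * (hskew (E Y) X)
      - hclosedβ X Y Z
  · rintro ⟨c, d, Y⟩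
    simp [dblω, dblBracket, dblθ, dblη]
  · rintro ⟨c, d, Y⟩
    simp [dblBracket, Prod.ext_iff]
end
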